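/- In Λ^q(V(λ)) for an infinite-dimensional irreducible lowest-power highest-weight sl(2,K)-module, the dimension of the space of primitive vectors (vectors annihilated by X) of weight λq - 2k equals P_q(k - q(q-3)/2) - P_q(k - q(q-3)/2 - 1). -/

import Mathlib

set_option linter.unusedSectionVars false
set_option linter.unusedVariables false



variable (K : Type*) [Field K] [CharZero K]

/-- The basis vector `f̃_i` of `V(λ)` (normalized so that `X f̃_i = f̃_{i-1}`),
viewed inside the exterior algebra `Λ^*(V(λ))`. -/
noncomputable def f (i : ℕ) : ExteriorAlgebra K (ℕ →₀ K) :=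
  ExteriorAlgebra.ι K (Finsupp.single i (1 : K))

/-- The monomial `f̃_{i_1} ∧ ... ∧ f̃_{i_q}`. -/
noncomputable def mono (s : Finset ℕ) : ExteriorAlgebra K (ℕ →₀ K) :=
  ((s.sort (· ≤ ·)).map (f K)).prod

/-- `Λ^q_k(V(λ))`: the span of the monomials `f̃_{i_1} ∧ ... ∧ f̃_{i_q}` with
`0 ≤ i_1 < ... < i_q` and `i_1 + ... + i_q = k`; its vectors have `H`-weight `λq - 2k`. -/
noncomputable def LamWt (q k : ℕ) : Submodule K (ExteriorAlgebra K (ℕ →₀ K)) :=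
  Submodule.span K {x | ∃ s : Finset ℕ,
    s.card = q ∧ (∑ i ∈ s, i) = k ∧ x = mono K s}

/-- `P q m` for an integer argument `m`: the number of partitions of `m` into exactly
`q` positive parts (`0` if `m < 0`). -/
noncomputable def P (q : ℕ) (m : ℤ) : ℕ :=
  if 0 ≤ m then Fintype.card {p : Nat.Partition m.toNat // p.parts.card = q} else 0


lemma mono_empty : mono K ∅ = 1 := by simp [mono]

lemma mono_insert {a : ℕ} {s : Finset ℕ} (h : ∀ b ∈ s, a < b) (ha : a ∉ s) :
    mono K (insert a s) = f K a * mono K s := by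
  rw [mono, Finset.sort_insert _ (fun b hb => (h b hb).le) ha]
  simp [mono]

abbrev W := Finset ℕ →₀ K

/-- sign exponent -/
def sgn (i : ℕ) (s : Finset ℕ) : ℕ := (s.filter (· < i)).card

noncomputable def psi (i : ℕ) : Module.End K (W K) :=
  Finsupp.lift (W K) K (Finset ℕ) (fun s => if i ∈ s then 0 else
    ((-1 : K) ^ (sgn i s)) • Finsupp.single (insert i s) (1 : K))

lemma psi_single (i : ℕ) (s : Finset ℕ) (c : K) :
    psi K i (Finsupp.single s c) = (if i ∈ s then 0 else
      (c * (-1 : K) ^ (sgn i s)) • Finsupp.single (insert i s) (1 : K)) := by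
  rw [psi, Finsupp.lift_apply, Finsupp.sum_single_index (by simp)]
  split_ifs <;> simp [smul_smul]

lemma sgn_insert_lt {i j : ℕ} (h : i < j) (s : Finset ℕ) (hj : j ∉ s) :
    sgn i (insert j s) = sgn i s := by
  unfold sgn
  rw [Finset.filter_insert, if_neg (by omega)]

lemma sgn_insert_gt {i j : ℕ} (h : j < i) (s : Finset ℕ) (hj : j ∉ s) :
    sgn i (insert j s) = sgn i s + 1 := by
  unfold sgn
  rw [Finset.filter_insert, if_pos h, Finset.card_insert_of_notMem (by simp [hj])]

lemma psi_anticomm (i j : ℕ) : psi K i * psi K j + psi K j * psi K i = 0 := by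
  have key : ∀ p r : ℕ, p < r → ∀ s : Finset ℕ,
      (psi K p * psi K r + psi K r * psi K p) (Finsupp.single s 1) = 0 := by
    intro p r hpr s
    simp only [LinearMap.add_apply, Module.End.mul_apply, psi_single, one_mul]
    by_cases hr : r ∈ s <;> by_cases hp : p ∈ s
    · simp [hr, hp]
    · simp only [if_pos hr, if_neg hp, map_zero, psi_single, zero_add,
        Finset.mem_insert, if_pos (Or.inr hr)]
      rw [map_smul, psi_single, if_pos (Finset.mem_insert.2 (Or.inr hr))]
      simp
    · simp only [if_pos hp, if_neg hr, map_zero, psi_single, add_zero,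
        Finset.mem_insert, if_pos (Or.inr hp)]
      rw [map_smul, psi_single, if_pos (Finset.mem_insert.2 (Or.inr hp))]
      simp
    · simp only [if_neg hr, if_neg hp, map_smul, psi_single,
        Finset.mem_insert, if_neg (by push_neg; exact ⟨by omega, hp⟩ : ¬(p = r ∨ p ∈ s)),
        if_neg (by push_neg; exact ⟨by omega, hr⟩ : ¬(r = p ∨ r ∈ s))]
      rw [Finset.insert_comm, sgn_insert_lt hpr s hr, sgn_insert_gt hpr s hp]
      rw [smul_smul, smul_smul, ← add_smul, pow_succ]
      ring_nf
      simp
  have ext1 : ∀ g h : Module.End K (W K),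
      (∀ s, g (Finsupp.single s 1) = h (Finsupp.single s 1)) → g = h :=
    fun g h H => Finsupp.lhom_ext' fun s => LinearMap.ext_ring (by simpa using H s)
  have sq : ∀ p : ℕ, psi K p * psi K p = 0 := by
    intro p
    apply ext1
    intro s
    simp only [Module.End.mul_apply, psi_single, LinearMap.zero_apply]
    by_cases hp : p ∈ s
    · simp [hp]
    · rw [if_neg hp, map_smul, psi_single, if_pos (Finset.mem_insert_self p s)]
      simp
  rcases Nat.lt_trichotomy i j with h | rfl | h
  · exact ext1 _ _ fun s => by rw [key i j h s]; simp
  · rw [sq i, add_zero]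
  · rw [add_comm]
    exact ext1 _ _ fun s => by rw [key j i h s]; simp

noncomputable def phi : (ℕ →₀ K) →ₗ[K] Module.End K (W K) :=
  Finsupp.lift (Module.End K (W K)) K ℕ (psi K)

lemma phi_single (i : ℕ) : phi K (Finsupp.single i 1) = psi K i := by
  rw [phi, Finsupp.lift_apply, Finsupp.sum_single_index (by simp), one_smul]

lemma phi_sq (v : ℕ →₀ K) : phi K v * phi K v = 0 := by
  rw [phi, Finsupp.lift_apply]
  rw [Finsupp.sum]
  rw [Finset.sum_mul_sum]
  have e : ∀ i j : ℕ, (v i • psi K i) * (v j • psi K j)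
      = (v i * v j) • (psi K i * psi K j) := by
    intro i j; rw [smul_mul_smul_comm]
  simp_rw [e]
  set S := ∑ i ∈ v.support, ∑ j ∈ v.support, (v i * v j) • (psi K i * psi K j) with hS
  have h2 : S + S = 0 := by
    nth_rewrite 2 [hS]
    rw [Finset.sum_comm]
    rw [hS, ← Finset.sum_add_distrib]
    refine Finset.sum_eq_zero fun i _ => ?_
    rw [← Finset.sum_add_distrib]
    refine Finset.sum_eq_zero fun j _ => ?_
    rw [mul_comm (v j) (v i), ← smul_add, psi_anticomm, smul_zero]
  have h3 : (2:K) • S = 0 := by rw [two_smul]; exact h2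
  rcases smul_eq_zero.mp h3 with h | h
  · exact absurd h two_ne_zero
  · exact h

noncomputable def Phi : ExteriorAlgebra K (ℕ →₀ K) →ₐ[K] Module.End K (W K) :=
  ExteriorAlgebra.lift K ⟨phi K, phi_sq K⟩

lemma Phi_f (i : ℕ) : Phi K (f K i) = psi K i := by
  rw [Phi, f, ExteriorAlgebra.lift_ι_apply, phi_single]

lemma Phi_mono (s : Finset ℕ) :
    Phi K (mono K s) (Finsupp.single ∅ 1) = Finsupp.single s 1 := by
  induction s using Finset.induction_on_min with
  | empty => rw [mono_empty, map_one]; rfl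
  | insert a s ha ih =>
    have ha' : a ∉ s := fun h => lt_irrefl a (ha a h)
    rw [mono_insert K ha ha', map_mul, Module.End.mul_apply, ih, Phi_f, psi_single,
      if_neg ha']
    have : sgn a s = 0 := by
      unfold sgn
      rw [Finset.card_eq_zero, Finset.filter_eq_empty_iff]
      intro b hb
      exact not_lt.mpr (ha b hb).le
    rw [this]
    norm_num

lemma mono_li : LinearIndependent K (fun s : Finset ℕ => mono K s) := by
  let L : ExteriorAlgebra K (ℕ →₀ K) →ₗ[K] W K :=
    { toFun := fun x => Phi K x (Finsupp.single ∅ 1)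
      map_add' := fun x y => by simp
      map_smul' := fun c x => by simp }
  have hcomp : (L ∘ fun s : Finset ℕ => mono K s) = fun s => Finsupp.single s (1:K) := by
    funext s; exact Phi_mono K s
  apply LinearIndependent.of_comp L
  rw [hcomp]
  have h := (Finsupp.basisSingleOne (R := K) (ι := Finset ℕ)).linearIndependent
  rwa [Finsupp.coe_basisSingleOne] at h

section Xe
variable {K}
variable (Xe : Module.End K (ExteriorAlgebra K (ℕ →₀ K)))
  (hXL : ∀ x y, Xe (x * y) = Xe x * y + x * Xe y)
  (hX0 : Xe (f K 0) = 0)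
  (hX : ∀ i : ℕ, Xe (f K (i + 1)) = f K i)

/-- one term of the action of `Xe` on a monomial -/
noncomputable def Xterm (s : Finset ℕ) (i : ℕ) : ExteriorAlgebra K (ℕ →₀ K) :=
  if 0 < i ∧ i - 1 ∉ s then mono K (insert (i-1) (s.erase i)) else 0

include hXL in
lemma Xe_one : Xe 1 = 0 := by
  have := hXL 1 1
  simp only [mul_one, one_mul] at this
  have h2 : Xe 1 + Xe 1 = Xe 1 + 0 := by rw [add_zero, ← this]
  exact (add_left_cancel h2)

include hXL hX0 hX in
lemma Xe_mono (s : Finset ℕ) : Xe (mono K s) = ∑ i ∈ s, Xterm s i := by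
  induction s using Finset.induction_on_min with
  | empty => rw [mono_empty, Xe_one Xe hXL, Finset.sum_empty]
  | insert a t ha ih =>
    have ha' : a ∉ t := fun h => lt_irrefl a (ha a h)
    rw [mono_insert K ha ha', hXL, ih, Finset.sum_insert ha', Finset.mul_sum]
    congr 1
    · -- Xe (f a) * mono t = Xterm (insert a t) a
      match a, ha with
      | 0, _ => rw [hX0, zero_mul, Xterm, if_neg (by simp)]
      | (b+1 : ℕ), ha =>
        rw [hX b, Xterm]
        have hb : b ∉ insert (b+1) t := by
          simp only [Finset.mem_insert]
          push_neg
          exact ⟨by omega, fun h => by have := ha b h; omega⟩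
        rw [if_pos ⟨Nat.succ_pos b, by simpa using hb⟩]
        rw [Nat.add_sub_cancel, Finset.erase_insert ha']
        rw [mono_insert K (fun c hc => by have := ha c hc; omega)
          (fun h => by have := ha b h; omega)]
    · -- ∑ f a * Xterm t i = ∑ Xterm (insert a t) i
      refine Finset.sum_congr rfl fun i hi => ?_
      have hai : a < i := ha i hi
      rw [Xterm, Xterm]
      by_cases h1 : i - 1 ∈ t
      · rw [if_neg (fun hc => hc.2 h1), mul_zero,
          if_neg (fun hc => hc.2 (Finset.mem_insert_of_mem h1))]
      · by_cases h2 : i - 1 = a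
        · -- term is zero on the RHS; LHS has f a * f a = 0 inside
          rw [if_pos ⟨by omega, h1⟩,
            if_neg (fun hc => hc.2 (by rw [h2]; exact Finset.mem_insert_self a t)), h2]
          have hnm : a ∉ t.erase i := fun h => ha' (Finset.mem_of_mem_erase h)
          rw [mono_insert K (fun c hc => by
              have := ha c (Finset.mem_of_mem_erase hc)
              omega) hnm, ← mul_assoc]
          have hff : f K a * f K a = 0 := ExteriorAlgebra.ι_sq_zero _
          rw [hff, zero_mul]
        · rw [if_pos ⟨by omega, h1⟩,
            if_pos ⟨by omega, by
              simp only [Finset.mem_insert]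
              push_neg
              exact ⟨h2, h1⟩⟩]
          rw [Finset.erase_insert_of_ne (by omega : a ≠ i)]
          rw [Finset.insert_comm]
          rw [mono_insert (K := K) (a := a) (s := insert (i-1) (t.erase i))
            (fun c hc => by
              rcases Finset.mem_insert.mp hc with rfl | hc
              · omega
              · exact ha c (Finset.mem_of_mem_erase hc))
            (by
              simp only [Finset.mem_insert]
              push_neg
              exact ⟨by omega, fun h => ha' (Finset.mem_of_mem_erase h)⟩)]
end Xe

/-- the finite set of index sets -/
def Sfin (q k : ℕ) : Finset (Finset ℕ) :=
  (Finset.range (k+1)).powerset.filter (fun s => s.card = q ∧ ∑ i ∈ s, i = k)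

lemma mem_Sfin {q k : ℕ} {s : Finset ℕ} :
    s ∈ Sfin q k ↔ s.card = q ∧ ∑ i ∈ s, i = k := by
  constructor
  · intro h; exact (Finset.mem_filter.mp h).2
  · intro h
    refine Finset.mem_filter.mpr ⟨Finset.mem_powerset.mpr fun a ha => ?_, h⟩
    have : a ≤ ∑ i ∈ s, i := Finset.single_le_sum (fun i _ => Nat.zero_le i) ha
    rw [Finset.mem_range]; omega

lemma LamWt_eq (q k : ℕ) :
    LamWt K q k = Submodule.span K (mono K '' ↑(Sfin q k)) := by
  have hset : {x : ExteriorAlgebra K (ℕ →₀ K) | ∃ s : Finset ℕ,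
      s.card = q ∧ (∑ i ∈ s, i) = k ∧ x = mono K s} = mono K '' ↑(Sfin q k) := by
    ext x
    simp only [Set.mem_setOf_eq, Set.mem_image, Finset.mem_coe, mem_Sfin]
    constructor
    · rintro ⟨s, h1, h2, rfl⟩; exact ⟨s, ⟨h1, h2⟩, rfl⟩
    · rintro ⟨s, ⟨h1, h2⟩, rfl⟩; exact ⟨s, h1, h2, rfl⟩
  rw [LamWt, hset]

set_option maxHeartbeats 1000000 in
instance LamWt_fd (q k : ℕ) : FiniteDimensional K (LamWt K q k) := by
  rw [LamWt_eq]
  exact FiniteDimensional.span_of_finite K (Set.Finite.image _ (Finset.finite_toSet _))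

lemma finrank_LamWt (q k : ℕ) :
    Module.finrank K (LamWt K q k) = (Sfin q k).card := by
  classical
  have hli : LinearIndependent K (fun s : ↥(Sfin q k) => mono K s.val) :=
    (mono_li K).comp Subtype.val Subtype.val_injective
  have hsp : LamWt K q k = Submodule.span K (Set.range fun s : ↥(Sfin q k) => mono K s.val) := by
    rw [LamWt_eq]
    congr 1
    ext x
    constructor
    · rintro ⟨s, hs, rfl⟩; exact ⟨⟨s, hs⟩, rfl⟩
    · rintro ⟨⟨s, hs⟩, rfl⟩; exact ⟨s, hs, rfl⟩
  rw [hsp, finrank_span_eq_card hli, Fintype.card_coe]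

section XeMap
variable {K}
variable (Xe : Module.End K (ExteriorAlgebra K (ℕ →₀ K)))
  (hXL : ∀ x y, Xe (x * y) = Xe x * y + x * Xe y)
  (hX0 : Xe (f K 0) = 0)
  (hX : ∀ i : ℕ, Xe (f K (i + 1)) = f K i)

lemma newset_card {s : Finset ℕ} {i : ℕ} (hi : i ∈ s) (h1 : 0 < i) (h2 : i - 1 ∉ s) :
    (insert (i-1) (s.erase i)).card = s.card := by
  rw [Finset.card_insert_of_notMem (fun h => h2 (Finset.mem_of_mem_erase h)),
    Finset.card_erase_of_mem hi]
  have : 1 ≤ s.card := Finset.card_pos.mpr ⟨i, hi⟩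
  omega

lemma newset_sum {s : Finset ℕ} {i : ℕ} (hi : i ∈ s) (h1 : 0 < i) (h2 : i - 1 ∉ s) :
    ∑ j ∈ insert (i-1) (s.erase i), j = (∑ j ∈ s, j) - 1 := by
  rw [Finset.sum_insert (fun h => h2 (Finset.mem_of_mem_erase h))]
  have herase : (∑ j ∈ s.erase i, j) + i = ∑ j ∈ s, j := Finset.sum_erase_add s _ hi
  have : i ≤ ∑ j ∈ s, j := Finset.single_le_sum (fun j _ => Nat.zero_le j) hi
  omega

include hXL hX0 hX in
lemma Xterm_mem {q k : ℕ} {s : Finset ℕ} (hcard : s.card = q) (hsum : ∑ i ∈ s, i = k)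
    (i : ℕ) (hi : i ∈ s) : Xterm s i ∈ LamWt K q (k - 1) := by
  rw [Xterm]
  split_ifs with h
  · apply Submodule.subset_span
    exact ⟨insert (i-1) (s.erase i), by rw [newset_card hi h.1 h.2, hcard],
      by rw [newset_sum hi h.1 h.2, hsum], rfl⟩
  · exact Submodule.zero_mem _

include hXL hX0 hX in
lemma Xe_maps {q k : ℕ} : ∀ x ∈ LamWt K q k, Xe x ∈ LamWt K q (k - 1) := by
  intro x hx
  induction hx using Submodule.span_induction with
  | mem y hy =>
    obtain ⟨s, h1, h2, rfl⟩ := hy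
    rw [Xe_mono Xe hXL hX0 hX]
    exact Submodule.sum_mem _ fun i hi => Xterm_mem Xe hXL hX0 hX h1 h2 i hi
  | zero => rw [map_zero]; exact Submodule.zero_mem _
  | add y z _ _ hy hz => rw [map_add]; exact Submodule.add_mem _ hy hz
  | smul c y _ hy => rw [map_smul]; exact Submodule.smul_mem _ _ hy

include hXL hX0 hX in
lemma Xe_zero_on_k0 {q : ℕ} : ∀ x ∈ LamWt K q 0, Xe x = 0 := by
  intro x hx
  induction hx using Submodule.span_induction with
  | mem y hy =>
    obtain ⟨s, h1, h2, rfl⟩ := hy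
    rw [Xe_mono Xe hXL hX0 hX]
    apply Finset.sum_eq_zero
    intro i hi
    have : i ≤ 0 := h2 ▸ Finset.single_le_sum (fun j _ => Nat.zero_le j) hi
    rw [Xterm, if_neg (by omega)]
  | zero => exact map_zero _
  | add y z _ _ hy hz => rw [map_add, hy, hz, add_zero]
  | smul c y _ hy => rw [map_smul, hy, smul_zero]

include hXL hX0 hX in
lemma mono_mem_map : ∀ d : ℕ, ∀ t : Finset ℕ, ∀ j : ℕ, j ∈ t → (∀ b ∈ t, b ≤ j) →
    (∑ i ∈ t, i) - j ≤ d →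
    mono K t ∈ Submodule.map Xe (LamWt K t.card ((∑ i ∈ t, i) + 1)) := by
  intro d
  induction d using Nat.strong_induction_on with
  | _ d ih =>
  intro t j hj hmax hd
  classical
  set s : Finset ℕ := insert (j+1) (t.erase j) with hs
  have hj1t : j + 1 ∉ t.erase j := fun h => by
    have := hmax _ (Finset.mem_of_mem_erase h); omega
  have hjs : j ∉ s := by
    simp only [hs, Finset.mem_insert]
    push_neg
    exact ⟨by omega, Finset.notMem_erase j t⟩
  have hcard : s.card = t.card := by
    rw [hs, Finset.card_insert_of_notMem hj1t, Finset.card_erase_of_mem hj]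
    have : 1 ≤ t.card := Finset.card_pos.mpr ⟨j, hj⟩
    omega
  have hjsum : j ≤ ∑ i ∈ t, i := Finset.single_le_sum (fun i _ => Nat.zero_le i) hj
  have hesum : (∑ i ∈ t.erase j, i) + j = ∑ i ∈ t, i := Finset.sum_erase_add t _ hj
  have hsum : ∑ i ∈ s, i = (∑ i ∈ t, i) + 1 := by
    rw [hs, Finset.sum_insert hj1t]; omega
  have hmem : mono K s ∈ LamWt K t.card ((∑ i ∈ t, i) + 1) :=
    Submodule.subset_span ⟨s, hcard, hsum, rfl⟩
  have hterm0 : Xterm s (j+1) = mono K t := by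
    rw [Xterm, if_pos ⟨Nat.succ_pos j, by simpa using hjs⟩, Nat.add_sub_cancel,
      Finset.erase_insert hj1t, Finset.insert_erase hj]
  have hsplit : Xe (mono K s) = mono K t + ∑ i ∈ t.erase j, Xterm s i := by
    rw [Xe_mono Xe hXL hX0 hX, hs, Finset.sum_insert hj1t, ← hs, hterm0]
  have hrest : (∑ i ∈ t.erase j, Xterm s i) ∈
      Submodule.map Xe (LamWt K t.card ((∑ i ∈ t, i) + 1)) := by
    apply Submodule.sum_mem
    intro i hi
    have hit : i ∈ t := Finset.mem_of_mem_erase hi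
    have hij : i ≠ j := Finset.ne_of_mem_erase hi
    have hile : i ≤ j := hmax i hit
    have his : i ∈ s := Finset.mem_insert_of_mem hi
    by_cases hc : 0 < i ∧ i - 1 ∉ s
    · -- nonzero term: apply induction hypothesis
      have hisum : i ≤ ∑ b ∈ t.erase j, b :=
        Finset.single_le_sum (fun b _ => Nat.zero_le b) hi
      have hd1 : 1 ≤ d := by omega
      set t' : Finset ℕ := insert (i-1) (s.erase i) with ht'
      have hXt : Xterm s i = mono K t' := by rw [Xterm, if_pos hc]
      have hcard' : t'.card = s.card := newset_card his hc.1 hc.2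
      have hsum' : ∑ b ∈ t', b = ∑ b ∈ t, b := by
        rw [ht', newset_sum his hc.1 hc.2, hsum]
        omega
      have hj1t' : j + 1 ∈ t' := by
        rw [ht']
        apply Finset.mem_insert_of_mem
        exact Finset.mem_erase.mpr ⟨by omega, Finset.mem_insert_self _ _⟩
      have hmax' : ∀ b ∈ t', b ≤ j + 1 := by
        intro b hb
        rcases Finset.mem_insert.mp hb with rfl | hb
        · omega
        · rcases Finset.mem_insert.mp (Finset.mem_of_mem_erase hb) with rfl | hb'
          · omega
          · exact le_trans (hmax _ (Finset.mem_of_mem_erase hb')) (by omega)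
      have hdd : (∑ b ∈ t', b) - (j+1) ≤ d - 1 := by rw [hsum']; omega
      have := ih (d - 1) (by omega) t' (j+1) hj1t' hmax' hdd
      rw [hcard', hcard, hsum'] at this
      rw [hXt]
      exact this
    · rw [Xterm, if_neg hc]
      exact Submodule.zero_mem _
  have : mono K t = Xe (mono K s) - ∑ i ∈ t.erase j, Xterm s i := by
    rw [hsplit, add_sub_cancel_right]
  rw [this]
  exact Submodule.sub_mem _ (Submodule.mem_map_of_mem hmem) hrest
end XeMap

section Assemble
variable {K}
variable (Xe : Module.End K (ExteriorAlgebra K (ℕ →₀ K)))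
  (hXL : ∀ x y, Xe (x * y) = Xe x * y + x * Xe y)
  (hX0 : Xe (f K 0) = 0)
  (hX : ∀ i : ℕ, Xe (f K (i + 1)) = f K i)

include hXL hX0 hX in
lemma map_eq {q k : ℕ} (hq : 1 ≤ q) (hk : 1 ≤ k) :
    Submodule.map Xe (LamWt K q k) = LamWt K q (k - 1) := by
  apply le_antisymm
  · exact Submodule.map_le_iff_le_comap.mpr fun x hx => Xe_maps Xe hXL hX0 hX x hx
  · rw [LamWt]
    rw [Submodule.span_le]
    rintro x ⟨t, hcard, hsum, rfl⟩
    have ht : t.Nonempty := Finset.card_pos.mp (by omega)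
    have hj := t.max'_mem ht
    have h := mono_mem_map Xe hXL hX0 hX ((∑ i ∈ t, i) - t.max' ht) t (t.max' ht)
      hj (fun b hb => Finset.le_max' t b hb) le_rfl
    rw [hcard, hsum] at h
    rw [(by omega : k - 1 + 1 = k)] at h
    exact h

include hXL hX0 hX in
lemma finrank_inf_pos {q k : ℕ} (hq : 1 ≤ q) (hk : 1 ≤ k) :
    Module.finrank K ↥(LamWt K q k ⊓ LinearMap.ker Xe) =
      (Sfin q k).card - (Sfin q (k-1)).card := by
  classical
  have hmaps : ∀ x ∈ LamWt K q k, Xe x ∈ LamWt K q (k-1) :=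
    fun x hx => Xe_maps Xe hXL hX0 hX x hx
  set g := Xe.restrict hmaps with hg
  have hrange : LinearMap.range g = ⊤ := by
    rw [LinearMap.range_eq_top]
    rintro ⟨y, hy⟩
    rw [← map_eq Xe hXL hX0 hX hq hk] at hy
    obtain ⟨x, hx, hxy⟩ := hy
    exact ⟨⟨x, hx⟩, Subtype.ext hxy⟩
  have hker : LinearMap.ker g = Submodule.comap (LamWt K q k).subtype
      (LamWt K q k ⊓ LinearMap.ker Xe) := by
    rw [hg, LinearMap.ker_restrict]
    ext ⟨x, hx⟩
    simp [Submodule.mem_comap, hx]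
  have e1 : Module.finrank K ↥(LinearMap.ker g) =
      Module.finrank K ↥(LamWt K q k ⊓ LinearMap.ker Xe) := by
    rw [hker]
    exact (Submodule.comapSubtypeEquivOfLe inf_le_left).finrank_eq
  have rn := LinearMap.finrank_range_add_finrank_ker g
  rw [hrange, finrank_top, e1] at rn
  rw [finrank_LamWt, finrank_LamWt] at rn
  omega

include hXL hX0 hX in
lemma finrank_inf_k0 {q : ℕ} :
    Module.finrank K ↥(LamWt K q 0 ⊓ LinearMap.ker Xe) = (Sfin q 0).card := by
  have hle : LamWt K q 0 ≤ LinearMap.ker Xe :=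
    fun x hx => LinearMap.mem_ker.mpr (Xe_zero_on_k0 Xe hXL hX0 hX x hx)
  rw [inf_eq_left.mpr hle, finrank_LamWt]

lemma LamWt_q0 {k : ℕ} (hk : 1 ≤ k) : LamWt K 0 k = ⊥ := by
  rw [LamWt]
  convert Submodule.span_empty
  rw [Set.eq_empty_iff_forall_notMem]
  rintro x ⟨s, hcard, hsum, rfl⟩
  rw [Finset.card_eq_zero.mp hcard] at hsum
  simp at hsum
  omega
end Assemble

section Counting

lemma multiset_card_le_sum (m : Multiset ℕ) (h : ∀ x ∈ m, 0 < x) : m.card ≤ m.sum := by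
  induction m using Multiset.induction_on with
  | empty => simp
  | cons a t ih =>
    have ha : 0 < a := h a (Multiset.mem_cons_self a t)
    have := ih (fun x hx => h x (Multiset.mem_cons_of_mem hx))
    simp only [Multiset.card_cons, Multiset.sum_cons]
    omega

lemma P_small {q : ℕ} {m : ℤ} (h : m < q) : P q m = 0 := by
  rw [P]
  split_ifs with h0
  · rw [Fintype.card_eq_zero_iff]
    constructor
    rintro ⟨p, hp⟩
    have h1 := multiset_card_le_sum p.parts (fun x hx => p.parts_pos hx)
    rw [hp, p.parts_sum] at h1
    omega
  · rfl

/-- staircase count -/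
def cst : ℕ → ℕ
  | 0 => 0
  | (q+1) => cst q + q

lemma two_cst : ∀ q : ℕ, 2 * cst q = q * (q - 1)
  | 0 => rfl
  | 1 => rfl
  | (r+2) => by
    have ih := two_cst (r+1)
    rw [cst, Nat.mul_add, ih, Nat.succ_sub_one, Nat.succ_sub_one]
    ring

lemma cst_eq (q : ℕ) : cst q = q * (q - 1) / 2 := by
  have := two_cst q
  omega

/-- add the staircase to a list -/
def addStair : List ℕ → List ℕ
  | [] => []
  | (a :: t) => (a + t.length) :: addStair t

def subStair : List ℕ → List ℕ
  | [] => []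
  | (a :: t) => (a - t.length) :: subStair t

@[simp] lemma length_addStair (l : List ℕ) : (addStair l).length = l.length := by
  induction l with
  | nil => rfl
  | cons a t ih => simp [addStair, ih]

@[simp] lemma length_subStair (l : List ℕ) : (subStair l).length = l.length := by
  induction l with
  | nil => rfl
  | cons a t ih => simp [subStair, ih]

lemma sum_addStair (l : List ℕ) : (addStair l).sum = l.sum + cst l.length := by
  induction l with
  | nil => rfl
  | cons a t ih =>
    simp only [addStair, List.sum_cons, ih, List.length_cons, cst]
    omega

lemma length_le_head {a : ℕ} {t : List ℕ} (h : (a :: t).Pairwise (· > ·)) : t.length ≤ a := by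
  induction t generalizing a with
  | nil => simp
  | cons b t' ih =>
    rw [List.pairwise_cons] at h
    have hba : a > b := h.1 b (List.mem_cons_self)
    have := ih h.2
    simp only [List.length_cons]
    omega

lemma mem_addStair_lt {l : List ℕ} (hl : l.Pairwise (· ≥ ·)) {x : ℕ} (hx : x ∈ addStair l)
    {a : ℕ} (ha : ∀ b ∈ l, b ≤ a) : x < a + l.length := by
  induction l generalizing x with
  | nil => simp [addStair] at hx
  | cons b t ih =>
    rw [List.pairwise_cons] at hl
    simp only [addStair, List.mem_cons] at hx
    rcases hx with rfl | hx
    · have := ha b (List.mem_cons_self); simp only [List.length_cons]; omega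
    · have := ih hl.2 hx (fun c hc => ha c (List.mem_cons_of_mem b hc))
      simp only [List.length_cons]; omega

lemma sorted_addStair {l : List ℕ} (hl : l.Pairwise (· ≥ ·)) : (addStair l).Pairwise (· > ·) := by
  induction l with
  | nil => exact List.Pairwise.nil
  | cons a t ih =>
    rw [List.pairwise_cons] at hl
    rw [addStair, List.pairwise_cons]
    exact ⟨fun b hb => mem_addStair_lt hl.2 hb hl.1, ih hl.2⟩

lemma subStair_addStair (l : List ℕ) : subStair (addStair l) = l := by
  induction l with
  | nil => rfl
  | cons a t ih => rw [addStair, subStair, length_addStair, Nat.add_sub_cancel, ih]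

lemma addStair_subStair {l : List ℕ} (hl : l.Pairwise (· > ·)) : addStair (subStair l) = l := by
  induction l with
  | nil => rfl
  | cons a t ih =>
    rw [List.pairwise_cons] at hl
    have hlen : t.length ≤ a := length_le_head (by rw [List.pairwise_cons]; exact hl)
    rw [subStair, addStair, length_subStair, Nat.sub_add_cancel hlen, ih hl.2]

lemma mem_subStair_le {a : ℕ} {t : List ℕ} (h : (a :: t).Pairwise (· > ·)) {x : ℕ}
    (hx : x ∈ subStair t) : x ≤ a - t.length := by
  induction t generalizing a with
  | nil => simp [subStair] at hx
  | cons b t' ih =>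
    rw [List.pairwise_cons] at h
    have hab : b < a := h.1 b (List.mem_cons_self)
    have hlen : t'.length ≤ b := length_le_head h.2
    simp only [subStair, List.mem_cons] at hx
    rcases hx with rfl | hx
    · simp only [List.length_cons]; omega
    · have := ih h.2 hx
      simp only [List.length_cons]; omega

lemma sorted_subStair {l : List ℕ} (hl : l.Pairwise (· > ·)) : (subStair l).Pairwise (· ≥ ·) := by
  induction l with
  | nil => exact List.Pairwise.nil
  | cons a t ih =>
    rw [List.pairwise_cons] at hl
    rw [subStair, List.pairwise_cons]
    refine ⟨fun b hb => ?_, ih hl.2⟩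
    have := mem_subStair_le (show (a :: t).Pairwise (· > ·) by rw [List.pairwise_cons]; exact hl) hb
    omega

lemma sum_subStair {l : List ℕ} (hl : l.Pairwise (· > ·)) :
    (subStair l).sum + cst l.length = l.sum := by
  have h1 := sum_addStair (subStair l)
  rw [addStair_subStair hl, length_subStair] at h1
  omega
end Counting

section Bij
variable (q n : ℕ)

lemma sum_sort_ge (s : Finset ℕ) : (s.sort (· ≥ ·)).sum = ∑ i ∈ s, i := by
  have h : (↑(s.sort (· ≥ ·)) : Multiset ℕ) = s.1 := Finset.sort_eq s _
  calc (s.sort (· ≥ ·)).sum = (↑(s.sort (· ≥ ·)) : Multiset ℕ).sum := (Multiset.sum_coe _).symm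
  _ = s.1.sum := by rw [h]
  _ = ∑ i ∈ s, i := by rw [Finset.sum]; simp

lemma sum_toFinset_nodup (l : List ℕ) (h : l.Nodup) : ∑ i ∈ l.toFinset, i = l.sum := by
  have h2 : l.toFinset.val = (↑l : Multiset ℕ) := by
    simp only [List.toFinset, Multiset.toFinset]
    rw [Multiset.coe_dedup, h.dedup]
  rw [Finset.sum, h2]
  simp

lemma sum_map_succ (l : List ℕ) : (l.map (· + 1)).sum = l.sum + l.length := by
  induction l with
  | nil => rfl
  | cons a t ih => simp only [List.map_cons, List.sum_cons, ih, List.length_cons]; omega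

lemma map_succ_sub (l : List ℕ) : (l.map (· + 1)).map (· - 1) = l := by
  rw [List.map_map]
  have : ∀ a ∈ l, (((· - 1) ∘ (· + 1)) a) = id a := fun a _ => by simp
  rw [List.map_congr_left this, List.map_id]

lemma map_sub_succ (l : List ℕ) (h : ∀ x ∈ l, 0 < x) : (l.map (· - 1)).map (· + 1) = l := by
  rw [List.map_map]
  have : ∀ a ∈ l, (((· + 1) ∘ (· - 1)) a) = id a := fun a ha => by
    have := h a ha; simp; omega
  rw [List.map_congr_left this, List.map_id]

/-- strictly descending lists of length q summing to k ↔ index sets -/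
noncomputable def E1 : {s : Finset ℕ // s ∈ Sfin q (n + cst q)} ≃
    {l : List ℕ // l.Pairwise (· > ·) ∧ l.length = q ∧ l.sum = n + cst q} where
  toFun x := ⟨x.1.sort (· ≥ ·), by
    obtain ⟨h1, h2⟩ := mem_Sfin.mp x.2
    exact ⟨(Finset.sortedGT_sort x.1).pairwise, by rw [Finset.length_sort, h1],
      by rw [sum_sort_ge, h2]⟩⟩
  invFun x := ⟨x.1.toFinset, by
    obtain ⟨h1, h2, h3⟩ := x.2
    have hnd : x.1.Nodup := h1.nodup
    exact mem_Sfin.mpr ⟨by rw [List.toFinset_card_of_nodup hnd, h2],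
      by rw [sum_toFinset_nodup _ hnd, h3]⟩⟩
  left_inv x := Subtype.ext (Finset.sort_toFinset x.1 _)
  right_inv x := Subtype.ext ((List.toFinset_sort _ x.2.1.nodup).mpr
    (x.2.1.imp (fun hab => le_of_lt hab)))

/-- subtract the staircase -/
noncomputable def E2 : {l : List ℕ // l.Pairwise (· > ·) ∧ l.length = q ∧ l.sum = n + cst q} ≃
    {l : List ℕ // l.Pairwise (· ≥ ·) ∧ l.length = q ∧ l.sum = n} where
  toFun x := ⟨subStair x.1, by
    obtain ⟨h1, h2, h3⟩ := x.2
    refine ⟨sorted_subStair h1, by rw [length_subStair, h2], ?_⟩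
    have := sum_subStair h1
    rw [h2, h3] at this
    omega⟩
  invFun x := ⟨addStair x.1, by
    obtain ⟨h1, h2, h3⟩ := x.2
    exact ⟨sorted_addStair h1, by rw [length_addStair, h2],
      by rw [sum_addStair, h2, h3]⟩⟩
  left_inv x := Subtype.ext (addStair_subStair x.2.1)
  right_inv x := Subtype.ext (subStair_addStair x.1)

/-- shift by one -/
noncomputable def E3 : {l : List ℕ // l.Pairwise (· ≥ ·) ∧ l.length = q ∧ l.sum = n} ≃
    {l : List ℕ // l.Pairwise (· ≥ ·) ∧ (∀ x ∈ l, 0 < x) ∧ l.length = q ∧ l.sum = n + q} where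
  toFun x := ⟨x.1.map (· + 1), by
    obtain ⟨h1, h2, h3⟩ := x.2
    refine ⟨List.Pairwise.map _ (fun a b hab => by omega) h1,
      fun y hy => ?_, by rw [List.length_map, h2], by rw [sum_map_succ, h2, h3]⟩
    obtain ⟨z, _, rfl⟩ := List.mem_map.mp hy
    omega⟩
  invFun x := ⟨x.1.map (· - 1), by
    obtain ⟨h1, hpos, h2, h3⟩ := x.2
    refine ⟨List.Pairwise.map _ (fun a b hab => by omega) h1,
      by rw [List.length_map, h2], ?_⟩
    have hms := sum_map_succ (x.1.map (· - 1))
    rw [map_sub_succ _ hpos, List.length_map, h2, h3] at hms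
    omega⟩
  left_inv x := Subtype.ext (map_succ_sub x.1)
  right_inv x := Subtype.ext (map_sub_succ x.1 x.2.2.1)

/-- sorted positive lists are partitions -/
noncomputable def E4 : {l : List ℕ // l.Pairwise (· ≥ ·) ∧ (∀ x ∈ l, 0 < x) ∧ l.length = q ∧
      l.sum = n + q} ≃ {p : Nat.Partition (n + q) // p.parts.card = q} where
  toFun x := ⟨⟨(↑x.1 : Multiset ℕ),
      fun {i} hi => x.2.2.1 i (by simpa using hi),
      by rw [Multiset.sum_coe, x.2.2.2.2]⟩,
    by simp [Multiset.coe_card, x.2.2.2.1]⟩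
  invFun x := ⟨Multiset.sort x.1.parts (· ≥ ·), by
    refine ⟨Multiset.pairwise_sort _ _, fun y hy => x.1.parts_pos (Multiset.mem_sort _ |>.mp hy),
      by rw [Multiset.length_sort, x.2], ?_⟩
    have : (↑(Multiset.sort x.1.parts (· ≥ ·)) : Multiset ℕ) = x.1.parts :=
      Multiset.sort_eq _ _
    rw [← Multiset.sum_coe, this, x.1.parts_sum]⟩
  left_inv x := Subtype.ext (by
    apply List.Perm.eq_of_pairwise' (Multiset.pairwise_sort _ _) x.2.1
      (Multiset.coe_eq_coe.mp (Multiset.sort_eq _ _)))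
  right_inv x := Subtype.ext (Nat.Partition.ext (Multiset.sort_eq _ _))

lemma card_Sfin_ge : (Sfin q (n + cst q)).card = P q ((n + q : ℕ) : ℤ) := by
  classical
  rw [P, if_pos (Int.natCast_nonneg _), Int.toNat_natCast]
  rw [← Nat.card_eq_finsetCard]
  have e := ((E1 q n).trans ((E2 q n).trans ((E3 q n).trans (E4 q n))))
  calc Nat.card ↥(Sfin q (n + cst q)) = Nat.card {s : Finset ℕ // s ∈ Sfin q (n + cst q)} := rfl
  _ = Nat.card {p : Nat.Partition (n + q) // p.parts.card = q} := Nat.card_congr e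
  _ = Fintype.card {p : Nat.Partition (n + q) // p.parts.card = q} := Nat.card_eq_fintype_card
end Bij

lemma cst_le_sum (s : Finset ℕ) : cst s.card ≤ ∑ i ∈ s, i := by
  have hl := (Finset.sortedGT_sort s).pairwise
  have h := sum_subStair hl
  rw [Finset.length_sort, sum_sort_ge] at h
  omega

lemma harith (q k : ℕ) : (k:ℤ) - (q:ℤ)*((q:ℤ)-3)/2 = (k:ℤ) + q - cst q := by
  have h2 : 2 * (cst q : ℤ) = (q:ℤ) * ((q:ℤ) - 1) := by
    cases q with
    | zero => simp [cst]
    | succ r =>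
      have h := two_cst (r+1)
      rw [Nat.succ_sub_one] at h
      have h2' : (2:ℤ) * (cst (r+1) : ℤ) = ((r+1) : ℤ) * (r : ℤ) := by exact_mod_cast h
      push_cast at h2' ⊢
      linear_combination h2' 
  have h3 : (q:ℤ)*((q:ℤ)-3) = 2*((cst q : ℤ) - q) := by linear_combination -h2
  rw [h3, Int.mul_ediv_cancel_left _ two_ne_zero]
  ring

lemma card_Sfin (q k : ℕ) :
    (Sfin q k).card = P q ((k:ℤ) - (q:ℤ)*((q:ℤ)-3)/2) := by
  rw [harith]
  by_cases h : cst q ≤ k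
  · obtain ⟨n, rfl⟩ : ∃ n, k = n + cst q := ⟨k - cst q, by omega⟩
    rw [card_Sfin_ge q n]
    congr 1
    push_cast
    ring
  · rw [Finset.card_eq_zero.mpr, P_small (by omega)]
    rw [Finset.eq_empty_iff_forall_notMem]
    intro s hs
    obtain ⟨h1, h2⟩ := mem_Sfin.mp hs
    have := cst_le_sum s
    rw [h1, h2] at this
    omega

lemma P_q_zero {m : ℤ} (hm : 1 ≤ m) : P 0 m = 0 := by
  rw [P, if_pos (by omega)]
  rw [Fintype.card_eq_zero_iff]
  constructor
  rintro ⟨p, hp⟩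
  have h0 : p.parts = 0 := Multiset.card_eq_zero.mp hp
  have := p.parts_sum
  rw [h0] at this
  simp at this
  omega

/-- In `Λ^q(V(λ))`, for an infinite-dimensional irreducible highest-weight
`sl(2,K)`-module `V(λ)` (`λ ∉ ℕ`, `X` acting by `X f̃_i = f̃_{i-1}` and extended as a
derivation `Xe` to the exterior power), the dimension of the space of primitive vectors
(vectors annihilated by `X`) of weight `λq - 2k` equals
`P_q(k - q(q-3)/2) - P_q(k - q(q-3)/2 - 1)`. -/
theorem stmt15 (lam : K) (hlam : ∀ n : ℕ, lam ≠ (n : K))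
    (Xe He : Module.End K (ExteriorAlgebra K (ℕ →₀ K)))
    (hXL : ∀ x y, Xe (x * y) = Xe x * y + x * Xe y)
    (hHL : ∀ x y, He (x * y) = He x * y + x * He y)
    (hX0 : Xe (f K 0) = 0)
    (hX : ∀ i : ℕ, Xe (f K (i + 1)) = f K i)
    (hH : ∀ i : ℕ, He (f K i) = (lam - 2 * (i : K)) • f K i)
    (q k : ℕ) :
    Module.finrank K ↥(LamWt K q k ⊓ LinearMap.ker Xe) =
      P q ((k : ℤ) - (q : ℤ) * ((q : ℤ) - 3) / 2) -
        P q ((k : ℤ) - (q : ℤ) * ((q : ℤ) - 3) / 2 - 1) := by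
  rcases Nat.eq_zero_or_pos k with rfl | hk
  · rw [finrank_inf_k0 Xe hXL hX0 hX, card_Sfin]
    have h0 : P q (((0:ℕ) : ℤ) - (q:ℤ)*((q:ℤ)-3)/2 - 1) = 0 := by
      apply P_small
      have ha := harith q 0
      push_cast at ha ⊢
      rw [ha]
      have : (0:ℤ) ≤ (cst q : ℤ) := Int.natCast_nonneg _
      omega
    rw [h0, Nat.sub_zero]
  · rcases Nat.eq_zero_or_pos q with rfl | hq
    · rw [LamWt_q0 hk, bot_inf_eq, finrank_bot]
      have h1 : P 0 ((k:ℤ) - ((0:ℕ):ℤ)*(((0:ℕ):ℤ)-3)/2) = 0 := by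
        norm_num
        exact P_q_zero (by exact_mod_cast hk)
      rw [h1]
      omega
    · rw [finrank_inf_pos Xe hXL hX0 hX hq hk, card_Sfin, card_Sfin]
      have e : ((k-1 : ℕ):ℤ) - (q:ℤ)*((q:ℤ)-3)/2 = (k:ℤ) - (q:ℤ)*((q:ℤ)-3)/2 - 1 := by
        rw [harith q (k-1), harith q k]
        omega
      rw [e]
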